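/- For every natural number k there exists a natural number N such that every finite simple graph G with c₂(G) > k, all of whose proper induced subgraphs H satisfy c₂(H) ≤ k, has at most N vertices. (Consequently, the class of graphs with subgraph complementation number at most k is defined by a finite set of minimal forbidden induced subgraphs.) -/

import Mathlib

open Matrix

set_option linter.unusedSectionVars false
set_option maxHeartbeats 1000000

/-- A subgraph complementation system for `G`: a finite collection (multiset) of subsets of
vertices such that two distinct vertices are adjacent iff they lie together in an odd
number of the sets. -/
def IsSCS {V : Type*} [DecidableEq V] (G : SimpleGraph V) (𝒞 : Multiset (Finset V)) : Prop :=
  ∀ u v : V, u ≠ v →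
    (G.Adj u v ↔ Odd (Multiset.card (𝒞.filter (fun C => u ∈ C ∧ v ∈ C))))

/-- The subgraph complementation number `c₂(G)`: the minimum cardinality of a subgraph
complementation system for `G`. -/
noncomputable def c2 {V : Type*} [DecidableEq V] (G : SimpleGraph V) : ℕ :=
  sInf {k | ∃ 𝒞 : Multiset (Finset V), IsSCS G 𝒞 ∧ Multiset.card 𝒞 = k}

/-- A symmetric matrix over `F₂` fits `G` if its off-diagonal entries record adjacency. -/
def FitsF2 {V : Type*} (G : SimpleGraph V) (A : Matrix V V (ZMod 2)) : Prop :=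
  A.IsSymm ∧ ∀ u v : V, u ≠ v → (A u v = 1 ↔ G.Adj u v)

/-- The minimum rank of `G` over `F₂`: the minimum rank of a symmetric matrix over `F₂`
that fits `G`. -/
noncomputable def mrF2 {V : Type*} [Fintype V] (G : SimpleGraph V) : ℕ :=
  sInf {k | ∃ A : Matrix V V (ZMod 2), FitsF2 G A ∧ A.rank = k}

section Helpers
variable {V : Type} [Fintype V] [DecidableEq V]

/-- The pair finset of a `Sym2`. -/
def sym2ToFinset (e : Sym2 V) : Finset V :=
  Sym2.lift ⟨fun a b => ({a, b} : Finset V), fun a b => Finset.pair_comm a b⟩ e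

lemma mem_sym2ToFinset {x : V} {e : Sym2 V} : x ∈ sym2ToFinset e ↔ x ∈ e := by
  induction e using Sym2.ind with
  | _ a b => simp [sym2ToFinset, Sym2.mem_iff]

lemma exists_scs (G : SimpleGraph V) : ∃ 𝒞 : Multiset (Finset V), IsSCS G 𝒞 := by
  classical
  refine ⟨G.edgeFinset.val.map sym2ToFinset, fun u v huv => ?_⟩
  have h1 : (G.edgeFinset.val.map sym2ToFinset).filter (fun C => u ∈ C ∧ v ∈ C)
      = (G.edgeFinset.val.filter (fun e => u ∈ sym2ToFinset e ∧ v ∈ sym2ToFinset e)).map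
          sym2ToFinset := by
    rw [Multiset.filter_map]; rfl
  have h2 : G.edgeFinset.val.filter (fun e => u ∈ sym2ToFinset e ∧ v ∈ sym2ToFinset e)
      = G.edgeFinset.val.filter (fun e => e = s(u, v)) := by
    apply Multiset.filter_congr
    intro e he
    simp only [mem_sym2ToFinset]
    constructor
    · rintro ⟨h1, h2⟩
      induction e using Sym2.ind with
      | _ a b =>
        simp only [Sym2.mem_iff] at h1 h2
        rw [Sym2.eq_iff]
        rcases h1 with rfl | rfl <;> rcases h2 with rfl | rfl <;> tauto
    · rintro rfl
      simp [Sym2.mem_iff]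
  rw [h1, Multiset.card_map, h2, Multiset.filter_eq']
  rw [Multiset.card_replicate]
  by_cases h : G.Adj u v
  · rw [Multiset.count_eq_one_of_mem G.edgeFinset.nodup (by simpa using h)]
    simp [h]
  · rw [Multiset.count_eq_zero_of_notMem (by simpa using h)]
    simp [h]

lemma c2_le (G : SimpleGraph V) {𝒞 : Multiset (Finset V)} (h : IsSCS G 𝒞) :
    c2 G ≤ Multiset.card 𝒞 :=
  Nat.sInf_le ⟨𝒞, h, rfl⟩

lemma exists_min_scs (G : SimpleGraph V) :
    ∃ 𝒞 : Multiset (Finset V), IsSCS G 𝒞 ∧ Multiset.card 𝒞 = c2 G := by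
  have hne : {k | ∃ 𝒞 : Multiset (Finset V), IsSCS G 𝒞 ∧ Multiset.card 𝒞 = k}.Nonempty := by
    obtain ⟨𝒞, h⟩ := exists_scs G
    exact ⟨_, 𝒞, h, rfl⟩
  exact Nat.sInf_mem hne

lemma odd_iff_cast {n : ℕ} : Odd n ↔ (n : ZMod 2) = 1 := by
  rw [Nat.odd_iff]
  constructor
  · intro h
    have : ((n % 2 : ℕ) : ZMod 2) = ((n : ℕ) : ZMod 2) := by
      rw [ZMod.natCast_mod]
    rw [← this, h]; rfl
  · intro h
    have h2 : ((n % 2 : ℕ) : ZMod 2) = 1 := by rw [ZMod.natCast_mod, h]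
    have : n % 2 = 0 ∨ n % 2 = 1 := by omega
    rcases this with h3 | h3
    · rw [h3] at h2; exact absurd h2 (by decide)
    · exact h3

lemma cast_eq_zero_of_not_odd {n : ℕ} (h : ¬ Odd n) : (n : ZMod 2) = 0 := by
  rw [Nat.not_odd_iff_even] at h
  obtain ⟨m, rfl⟩ := h
  push_cast
  ring_nf
  rw [show ((2 : ZMod 2)) = 0 from rfl]
  ring

lemma induced_scs (G : SimpleGraph V) (S : Finset V) :
    ∃ 𝒟 : Multiset (Finset V),
      Multiset.card 𝒟 = c2 (G.induce (S : Set V)) ∧ (∀ C ∈ 𝒟, C ⊆ S) ∧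
      ∀ u ∈ S, ∀ x ∈ S, u ≠ x →
        (G.Adj u x ↔ Odd (Multiset.card (𝒟.filter (fun C => u ∈ C ∧ x ∈ C)))) := by
  classical
  obtain ⟨𝒞, h𝒞, hcard⟩ := exists_min_scs (G.induce (S : Set V))
  refine ⟨𝒞.map (Finset.map (Function.Embedding.subtype _)), by simpa using hcard, ?_, ?_⟩
  · intro C hC
    simp only [Multiset.mem_map] at hC
    obtain ⟨D, _, rfl⟩ := hC
    intro x hx
    simp only [Finset.mem_map, Function.Embedding.coe_subtype] at hx
    obtain ⟨⟨y, hy⟩, _, rfl⟩ := hx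
    exact Finset.mem_coe.mp hy
  · intro u hu x hx hux
    have key := h𝒞 ⟨u, Finset.mem_coe.mpr hu⟩ ⟨x, Finset.mem_coe.mpr hx⟩ (by simp [hux])
    simp only [SimpleGraph.comap_adj, Function.Embedding.coe_subtype] at key
    rw [key]
    have hc : Multiset.card ((𝒞.map (Finset.map (Function.Embedding.subtype _))).filter
          (fun C => u ∈ C ∧ x ∈ C))
        = Multiset.card (𝒞.filter (fun C =>
            (⟨u, Finset.mem_coe.mpr hu⟩ : (S : Set V)) ∈ C ∧
            (⟨x, Finset.mem_coe.mpr hx⟩ : (S : Set V)) ∈ C)) := by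
      rw [Multiset.filter_map, Multiset.card_map]
      congr 1
      apply Multiset.filter_congr
      intro D hD
      simp only [Function.comp_apply]
      exact and_congr
        (Finset.mem_map' (a := ⟨u, Finset.mem_coe.mpr hu⟩) (s := D) _)
        (Finset.mem_map' (a := ⟨x, Finset.mem_coe.mpr hx⟩) (s := D) _)
    rw [hc]

lemma cloning (G : SimpleGraph V) (w u : V) (huw : u ≠ w)
    (𝒟 : Multiset (Finset V)) (hw : ∀ C ∈ 𝒟, w ∉ C)
    (hscs : ∀ x y : V, x ≠ w → y ≠ w → x ≠ y →
      (G.Adj x y ↔ Odd (Multiset.card (𝒟.filter (fun C => x ∈ C ∧ y ∈ C)))))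
    (htwin : ∀ x : V, x ≠ u → x ≠ w → (G.Adj u x ↔ G.Adj w x))
    (hpar : G.Adj u w ↔ Odd (Multiset.card (𝒟.filter (fun C => u ∈ C ∧ u ∈ C)))) :
    IsSCS G (𝒟.map (fun C => if u ∈ C then insert w C else C)) := by
  classical
  set g : Finset V → Finset V := fun C => if u ∈ C then insert w C else C with hg
  have hmem : ∀ z : V, z ≠ w → ∀ C ∈ 𝒟, (z ∈ g C ↔ z ∈ C) := by
    intro z hz C hC
    simp only [hg]
    split
    · simp [Finset.mem_insert, hz]
    · rfl
  have hmemw : ∀ C ∈ 𝒟, (w ∈ g C ↔ u ∈ C) := by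
    intro C hC
    by_cases hu : u ∈ C <;> simp [hg, hu, hw C hC]
  have hcount : ∀ x y : V, Multiset.card ((𝒟.map g).filter (fun C => x ∈ C ∧ y ∈ C))
      = Multiset.card (𝒟.filter (fun C => x ∈ g C ∧ y ∈ g C)) := by
    intro x y
    rw [Multiset.filter_map, Multiset.card_map]
    rfl
  intro x y hxy
  rw [hcount]
  rcases eq_or_ne x w with rfl | hx
  · -- here `w` has been substituted by `x`
    have hyw : y ≠ x := fun h => hxy h.symm
    by_cases hyu : y = u
    · subst hyu
      have heq : 𝒟.filter (fun C => x ∈ g C ∧ y ∈ g C) = 𝒟.filter (fun C => y ∈ C ∧ y ∈ C) := by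
        apply Multiset.filter_congr
        intro C hC
        rw [hmemw C hC, hmem y hyw C hC]
      rw [heq, G.adj_comm]
      exact hpar
    · have heq : 𝒟.filter (fun C => x ∈ g C ∧ y ∈ g C) = 𝒟.filter (fun C => u ∈ C ∧ y ∈ C) := by
        apply Multiset.filter_congr
        intro C hC
        rw [hmemw C hC, hmem y hyw C hC]
      rw [heq, ← htwin y hyu hyw]
      exact hscs u y huw hyw (fun h => hyu h.symm)
  · rcases eq_or_ne y w with rfl | hy
    · -- here `w` has been substituted by `y`
      by_cases hxu : x = u
      · subst hxu
        have heq : 𝒟.filter (fun C => x ∈ g C ∧ y ∈ g C) = 𝒟.filter (fun C => x ∈ C ∧ x ∈ C) := by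
          apply Multiset.filter_congr
          intro C hC
          rw [hmemw C hC, hmem x hx C hC]
        rw [heq]
        exact hpar
      · have heq : 𝒟.filter (fun C => x ∈ g C ∧ y ∈ g C) = 𝒟.filter (fun C => u ∈ C ∧ x ∈ C) := by
          apply Multiset.filter_congr
          intro C hC
          rw [hmemw C hC, hmem x hx C hC, and_comm]
        rw [heq, G.adj_comm, ← htwin x hxu hx]
        exact hscs u x huw hx (fun h => hxu h.symm)
    · have heq : 𝒟.filter (fun C => x ∈ g C ∧ y ∈ g C) = 𝒟.filter (fun C => x ∈ C ∧ y ∈ C) := by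
        apply Multiset.filter_congr
        intro C hC
        rw [hmem x hx C hC, hmem y hy C hC]
      rw [heq]
      exact hscs x y hx hy hxy

lemma gram_bound {k d : ℕ} (hd : d ≤ k) (x : Fin (k+2) → (Fin d → ZMod 2)) (a : ZMod 2)
    (hdiag : ∀ i, (∑ t, x i t * x i t) = a + 1)
    (hoff : ∀ i j, i ≠ j → (∑ t, x i t * x j t) = a) : False := by
  have hnli : ¬ LinearIndependent (ZMod 2) (fun i : Fin (k+1) => x i.castSucc) := by
    intro h
    have hle := h.fintype_card_le_finrank
    rw [Module.finrank_fin_fun, Fintype.card_fin] at hle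
    omega
  obtain ⟨g, hsum, i₀, hi₀⟩ := Fintype.not_linearIndependent_iff.mp hnli
  have key : ∀ j : Fin (k+2), (∑ i : Fin (k+1), g i * (∑ t, x i.castSucc t * x j t)) = 0 := by
    intro j
    calc (∑ i : Fin (k+1), g i * ∑ t, x i.castSucc t * x j t)
        = ∑ i : Fin (k+1), ∑ t, g i * x i.castSucc t * x j t := by
          simp [Finset.mul_sum, mul_assoc]
      _ = ∑ t, ∑ i : Fin (k+1), g i * x i.castSucc t * x j t := Finset.sum_comm
      _ = ∑ t, (∑ i : Fin (k+1), g i * x i.castSucc t) * x j t := by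
          simp [Finset.sum_mul]
      _ = 0 := by
          refine Finset.sum_eq_zero fun t _ => ?_
          have h1 : (∑ i : Fin (k+1), g i • x i.castSucc) t = 0 := by rw [hsum]; rfl
          rw [Finset.sum_apply] at h1
          simp only [Pi.smul_apply, smul_eq_mul] at h1
          rw [h1, zero_mul]
  have e1 : (∑ i : Fin (k+1), g i) * a = 0 := by
    have := key (Fin.last (k+1))
    rw [Finset.sum_mul]
    rw [← this]
    refine Finset.sum_congr rfl fun i _ => ?_
    rw [hoff _ _ (Fin.ne_of_lt (Fin.castSucc_lt_last i))]
  have e2 : (∑ i : Fin (k+1), g i) * a + g i₀ = 0 := by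
    have hk := key i₀.castSucc
    have : ∀ i : Fin (k+1), g i * (∑ t, x i.castSucc t * x i₀.castSucc t)
        = g i * a + (if i = i₀ then g i else 0) := by
      intro i
      by_cases hii : i = i₀
      · subst hii
        rw [hdiag, if_pos rfl, mul_add, mul_one]
      · rw [hoff _ _ (fun h => hii (Fin.castSucc_injective _ h)), if_neg hii, add_zero]
    rw [Finset.sum_congr rfl (fun i _ => this i)] at hk
    rw [Finset.sum_add_distrib, Finset.sum_ite_eq' Finset.univ i₀ g] at hk
    rw [if_pos (Finset.mem_univ i₀), ← Finset.sum_mul] at hk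
    exact hk
  rw [e1, zero_add] at e2
  exact hi₀ e2

lemma dot_eq_countP (l : List (Finset V)) (x y : V) :
    (∑ t : Fin l.length,
      (if x ∈ l.get t then (1 : ZMod 2) else 0) * (if y ∈ l.get t then (1 : ZMod 2) else 0))
    = (l.countP (fun C => decide (x ∈ C ∧ y ∈ C)) : ZMod 2) := by
  induction l with
  | nil => simp
  | cons C l ih =>
    simp only [List.length_cons, Fin.sum_univ_succ, List.get, List.get_cons_succ', List.countP_cons]
    rw [ih]
    push_cast
    by_cases hx : x ∈ C <;> by_cases hy : y ∈ C <;>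
      simp [hx, hy, add_comm]

lemma card_filter_eq_countP (𝒟 : Multiset (Finset V)) (p : Finset V → Prop) [DecidablePred p] :
    Multiset.card (𝒟.filter p) = 𝒟.toList.countP (fun C => decide (p C)) := by
  conv_lhs => rw [← Multiset.coe_toList 𝒟]
  rw [← Multiset.countP_eq_card_filter, Multiset.coe_countP]

lemma dot_eq_count (𝒟 : Multiset (Finset V)) (x y : V) :
    (∑ t : Fin 𝒟.toList.length,
      (if x ∈ 𝒟.toList.get t then (1 : ZMod 2) else 0) *
      (if y ∈ 𝒟.toList.get t then (1 : ZMod 2) else 0))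
    = ((Multiset.card (𝒟.filter (fun C => x ∈ C ∧ y ∈ C)) : ℕ) : ZMod 2) := by
  rw [dot_eq_countP, card_filter_eq_countP]

/-- helper: commuted double filter -/
lemma filter_pair_eq (𝒞 : Multiset (Finset V)) (p x : V) :
    𝒞.filter (fun C => p ∈ C ∧ x ∈ C) = (𝒞.filter (fun C => p ∈ C)).filter (fun C => x ∈ C) := by
  rw [Multiset.filter_filter]
  apply Multiset.filter_congr
  intro C hC
  exact and_comm

end Helpers

theorem stmt18 (k : ℕ) :
    ∃ N : ℕ, ∀ (V : Type) [Fintype V] [DecidableEq V] (G : SimpleGraph V),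
      k < c2 G →
      (∀ S : Finset V, S ≠ Finset.univ → c2 (G.induce (S : Set V)) ≤ k) →
      Fintype.card V ≤ N := by
  refine ⟨2 ^ (k + 1) * (k + 2) + 1, ?_⟩
  intro V _ _ G hc2 hind
  classical
  by_contra hN
  push_neg at hN
  -- get a vertex v
  have hpos : 0 < Fintype.card V := by omega
  obtain ⟨v⟩ := Fintype.card_pos_iff.mp hpos
  set S : Finset V := Finset.univ.erase v with hS
  have hSne : S ≠ Finset.univ := by
    intro h
    have : v ∈ S := h ▸ Finset.mem_univ v
    exact (Finset.notMem_erase v _) this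
  obtain ⟨𝒞, h𝒞card, h𝒞sub, h𝒞adj⟩ := induced_scs G S
  have h𝒞k : Multiset.card 𝒞 ≤ k := h𝒞card ▸ hind S hSne
  -- signatures
  set σ : V → Multiset (Finset V) × Bool :=
    fun u => (𝒞.filter (fun C => u ∈ C), decide (G.Adj u v)) with hσ
  set B : Finset (Multiset (Finset V) × Bool) :=
    𝒞.powerset.toFinset ×ˢ (Finset.univ : Finset Bool) with hB
  have hmaps : ∀ u ∈ S, σ u ∈ B := by
    intro u hu
    rw [hB, Finset.mem_product]
    exact ⟨Multiset.mem_toFinset.mpr (Multiset.mem_powerset.mpr (Multiset.filter_le _ _)),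
      Finset.mem_univ _⟩
  have hBcard : B.card ≤ 2 ^ (k + 1) := by
    rw [hB, Finset.card_product]
    have h1 : 𝒞.powerset.toFinset.card ≤ Multiset.card 𝒞.powerset := Multiset.toFinset_card_le _
    rw [Multiset.card_powerset] at h1
    have h2 : (Finset.univ : Finset Bool).card = 2 := by simp
    rw [h2]
    calc 𝒞.powerset.toFinset.card * 2 ≤ 2 ^ Multiset.card 𝒞 * 2 := by omega
      _ ≤ 2 ^ k * 2 := by
          have := Nat.pow_le_pow_right (by norm_num : 1 ≤ 2) h𝒞k
          omega
      _ = 2 ^ (k + 1) := by ring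
  have hScard : S.card = Fintype.card V - 1 := by
    rw [hS, Finset.card_erase_of_mem (Finset.mem_univ v), Finset.card_univ]
  have hlt : B.card * (k + 2) < S.card := by
    have : B.card * (k + 2) ≤ 2 ^ (k + 1) * (k + 2) := Nat.mul_le_mul_right _ hBcard
    omega
  obtain ⟨b, hb, hfiber⟩ := Finset.exists_lt_card_fiber_of_mul_lt_card_of_maps_to hmaps hlt
  obtain ⟨T', hT'sub, hT'card⟩ :=
    Finset.exists_subset_card_eq (by omega : k + 3 ≤ (S.filter (fun u => σ u = b)).card)
  have hTs : ∀ z ∈ T', z ∈ S ∧ σ z = b := by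
    intro z hz
    have := hT'sub hz
    rw [Finset.mem_filter] at this
    exact this
  have hTnv : ∀ z ∈ T', z ≠ v := fun z hz => Finset.ne_of_mem_erase (hTs z hz).1
  -- the twin property
  have twin : ∀ p ∈ T', ∀ q ∈ T', ∀ x : V, x ≠ p → x ≠ q → (G.Adj p x ↔ G.Adj q x) := by
    intro p hp q hq x hxp hxq
    have hσeq : σ p = σ q := (hTs p hp).2.trans (hTs q hq).2.symm
    rcases eq_or_ne x v with rfl | hxv
    · have := congrArg Prod.snd hσeq
      simp only [hσ] at this
      exact decide_eq_decide.mp this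
    · have hxS : x ∈ S := Finset.mem_erase.mpr ⟨hxv, Finset.mem_univ x⟩
      have hpS : p ∈ S := (hTs p hp).1
      have hqS : q ∈ S := (hTs q hq).1
      rw [h𝒞adj p hpS x hxS (fun h => hxp h.symm), h𝒞adj q hqS x hxS (fun h => hxq h.symm)]
      have hσ1 : 𝒞.filter (fun C => p ∈ C) = 𝒞.filter (fun C => q ∈ C) := by
        have := congrArg Prod.fst hσeq
        simpa [hσ] using this
      rw [filter_pair_eq, filter_pair_eq, hσ1]
  -- pick w and the k+2 sources
  have hT'pos : 0 < T'.card := by omega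
  obtain ⟨w, hwT⟩ := Finset.card_pos.mp hT'pos
  set T'' : Finset V := T'.erase w with hT''
  have hT''card : T''.card = k + 2 := by
    rw [hT'', Finset.card_erase_of_mem hwT, hT'card]
    omega
  set u : Fin (k + 2) → V := fun i => (T''.equivFin.symm (Fin.cast hT''card.symm i) : V) with hu
  have hu_mem'' : ∀ i, u i ∈ T'' := fun i => (T''.equivFin.symm (Fin.cast hT''card.symm i)).2
  have hu_mem : ∀ i, u i ∈ T' := fun i => Finset.mem_of_mem_erase (hu_mem'' i)
  have hu_ne_w : ∀ i, u i ≠ w := fun i => Finset.ne_of_mem_erase (hu_mem'' i)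
  have hu_inj : ∀ i j, i ≠ j → u i ≠ u j := by
    intro i j hij h
    apply hij
    have h2 : T''.equivFin.symm (Fin.cast hT''card.symm i)
        = T''.equivFin.symm (Fin.cast hT''card.symm j) := Subtype.ext h
    have h3 := T''.equivFin.symm.injective h2
    exact Fin.cast_injective _ h3
  -- the deleted graph G - w
  set S₂ : Finset V := Finset.univ.erase w with hS₂
  have hS₂ne : S₂ ≠ Finset.univ := by
    intro h
    have : w ∈ S₂ := h ▸ Finset.mem_univ w
    exact (Finset.notMem_erase w _) this
  obtain ⟨𝒟, h𝒟card, h𝒟sub, h𝒟adj⟩ := induced_scs G S₂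
  have h𝒟k : Multiset.card 𝒟 ≤ k := h𝒟card ▸ hind S₂ hS₂ne
  have hw_notin : ∀ C ∈ 𝒟, w ∉ C := by
    intro C hC hwC
    exact (Finset.notMem_erase w _) (h𝒟sub C hC hwC)
  have hmemS₂ : ∀ x : V, x ≠ w → x ∈ S₂ := fun x hx =>
    Finset.mem_erase.mpr ⟨hx, Finset.mem_univ x⟩
  have hscs' : ∀ x y : V, x ≠ w → y ≠ w → x ≠ y →
      (G.Adj x y ↔ Odd (Multiset.card (𝒟.filter (fun C => x ∈ C ∧ y ∈ C)))) := by
    intro x y hx hy hxy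
    exact h𝒟adj x (hmemS₂ x hx) y (hmemS₂ y hy) hxy
  -- case split on whether some cloning source has correct parity
  by_cases hgood : ∃ i : Fin (k + 2),
      (G.Adj (u i) w ↔ Odd (Multiset.card (𝒟.filter (fun C => u i ∈ C ∧ u i ∈ C))))
  · obtain ⟨i, hpar⟩ := hgood
    have htwin' : ∀ x : V, x ≠ u i → x ≠ w → (G.Adj (u i) x ↔ G.Adj w x) :=
      fun x hx1 hx2 => twin (u i) (hu_mem i) w hwT x hx1 hx2
    have hclone := cloning G w (u i) (hu_ne_w i) 𝒟 hw_notin hscs' htwin' hpar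
    have := c2_le G hclone
    rw [Multiset.card_map] at this
    omega
  · push_neg at hgood
    -- all adjacencies within the class are equal to ε := Adj (u 0) w
    have hadj_w : ∀ i, (G.Adj (u i) w ↔ G.Adj (u 0) w) := by
      intro i
      rcases eq_or_ne i 0 with rfl | hi0
      · rfl
      · exact twin (u i) (hu_mem i) (u 0) (hu_mem 0) w
          (fun h => (hu_ne_w i) h.symm) (fun h => (hu_ne_w 0) h.symm)
    have hadj_uu : ∀ i j, i ≠ j → (G.Adj (u i) (u j) ↔ G.Adj (u 0) w) := by
      intro i j hij
      have h1 := twin (u j) (hu_mem j) w hwT (u i) (hu_inj i j hij) (hu_ne_w i)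
      rw [G.adj_comm (u j) (u i), G.adj_comm w (u i)] at h1
      exact h1.trans (hadj_w i)
    set a : ZMod 2 := if G.Adj (u 0) w then 1 else 0 with ha
    have hd : 𝒟.toList.length ≤ k := by rw [Multiset.length_toList]; exact h𝒟k
    refine gram_bound hd
      (fun i t => if u i ∈ 𝒟.toList.get t then (1 : ZMod 2) else 0) a ?_ ?_
    · intro i
      rw [dot_eq_count 𝒟 (u i) (u i)]
      by_cases hε : G.Adj (u 0) w
      · have hodd : ¬ Odd (Multiset.card (𝒟.filter (fun C => u i ∈ C ∧ u i ∈ C))) := by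
          rcases hgood i with ⟨_, h⟩ | ⟨hna, _⟩
          · exact h
          · exact absurd ((hadj_w i).mpr hε) hna
        rw [cast_eq_zero_of_not_odd hodd, ha, if_pos hε]
        decide
      · have hodd : Odd (Multiset.card (𝒟.filter (fun C => u i ∈ C ∧ u i ∈ C))) := by
          rcases hgood i with ⟨ha', _⟩ | ⟨_, h⟩
          · exact absurd ((hadj_w i).mp ha') hε
          · exact h
        rw [odd_iff_cast.mp hodd, ha, if_neg hε, zero_add]
    · intro i j hij
      rw [dot_eq_count 𝒟 (u i) (u j)]
      have hiff : (G.Adj (u i) (u j) ↔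
          Odd (Multiset.card (𝒟.filter (fun C => u i ∈ C ∧ u j ∈ C)))) :=
        hscs' (u i) (u j) (hu_ne_w i) (hu_ne_w j) (hu_inj i j hij)
      by_cases hε : G.Adj (u 0) w
      · have hodd : Odd (Multiset.card (𝒟.filter (fun C => u i ∈ C ∧ u j ∈ C))) :=
          hiff.mp ((hadj_uu i j hij).mpr hε)
        rw [odd_iff_cast.mp hodd, ha, if_pos hε]
      · have hodd : ¬ Odd (Multiset.card (𝒟.filter (fun C => u i ∈ C ∧ u j ∈ C))) :=
          fun h => hε ((hadj_uu i j hij).mp (hiff.mpr h))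
        rw [cast_eq_zero_of_not_odd hodd, ha, if_neg hε]
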